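/- Along the bifurcation curve Σ^(r), the identity R(r) = (r - r_c)²(r² + 2r_c r - 3r_c² + Z²) holds, where Z² = 4r_c(3r_c - a² - 3r_c² + r_c³)/(1 - r_c)². -/
import Mathlib

/-- Along the bifurcation curve `Σ^(r)`, the identity
`R(r) = (r - r_c)²(r² + 2 r_c r - 3 r_c² + Z²)` holds. -/
theorem stmt_11 (a rc : ℝ) (ha0 : 0 < a) (ha1 : a < 1) (hrc : 1 < rc) :
    let lam : ℝ := ((1 + rc) * a ^ 2 + rc ^ 2 * (rc - 3)) / (a * (1 - rc))
    let η : ℝ := rc ^ 3 * (4 * a ^ 2 - rc * (rc - 3) ^ 2) / (a ^ 2 * (rc - 1) ^ 2)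
    let Zsq : ℝ := 4 * rc * (3 * rc - (a ^ 2 + 3 * rc ^ 2) + rc ^ 3) / (1 - rc) ^ 2
    ∀ r : ℝ,
      (r ^ 2 + a ^ 2 - a * lam) ^ 2 - (η + (lam - a) ^ 2) * (r ^ 2 - 2 * r + a ^ 2)
        = (r - rc) ^ 2 * (r ^ 2 + 2 * rc * r - 3 * rc ^ 2 + Zsq) := by
  intro lam η Zsq r
  have ha : a ≠ 0 := ne_of_gt ha0
  have h1 : (1 : ℝ) - rc ≠ 0 := by linarith
  have h2 : rc - 1 ≠ 0 := by linarith
  simp only [lam, η, Zsq]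
  field_simp
  ring
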